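/- For every nonempty pair-word w (a concatenation of blocks from {41, 43, 23, 25}) and every j in {1,2,3,4}, the cyclic word T_j(w) is cyclically equal to a pair-word; in particular, the length of T_j(w) is even. -/

import Mathlib

/-- `sigma5 j x` is the representative in `{1,...,5}` of `x - j` mod 5. -/
def sigma5 (j x : ℕ) : ℕ := (x + 4 - j) % 5 + 1

/-- Position of a letter along the path graph 1—4—3—2—5. -/
def pos5 (x : ℕ) : ℕ :=
  match x with
  | 1 => 0 | 4 => 1 | 3 => 2 | 2 => 3 | 5 => 4 | _ => 0

/-- The vertex at a given position of the path graph 1—4—3—2—5. -/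
def vtx5 (i : ℕ) : ℕ := [1, 4, 3, 2, 5].getD i 0

/-- `ins5 x y` is the word of interior vertices, in order, of the unique simple
path from `x` to `y` in the path graph 1—4—3—2—5 (empty if `x = y`). -/
def ins5 (x y : ℕ) : List ℕ :=
  if pos5 x < pos5 y then
    (List.range (pos5 y - pos5 x - 1)).map (fun k => vtx5 (pos5 x + 1 + k))
  else
    (List.range (pos5 x - pos5 y - 1)).map (fun k => vtx5 (pos5 x - 1 - k))

/-- Graph distance in the path graph 1—4—3—2—5. -/
def dist5 (x y : ℕ) : ℕ := max (pos5 x) (pos5 y) - min (pos5 x) (pos5 y)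

/-- Linear transformation `T_j^{lin}`: subtract `j` mod 5 from each letter and insert,
between consecutive letters, the interior vertices of the connecting path (no wrap-around). -/
def Tlin (j : ℕ) : List ℕ → List ℕ
  | [] => []
  | [x] => [sigma5 j x]
  | x :: y :: rest => (sigma5 j x :: ins5 (sigma5 j x) (sigma5 j y)) ++ Tlin j (y :: rest)

/-- Cyclic transformation `T_j`: as `Tlin`, with the wrap-around insertion from the
last letter back to the first appended at the end. -/
def Tcyc (j : ℕ) (w : List ℕ) : List ℕ :=
  Tlin j w ++ ins5 (sigma5 j (w.getLastD 0)) (sigma5 j (w.headD 0))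

/-- A pair-word: a finite concatenation of the two-letter blocks 41, 43, 23, 25. -/
def IsPairWord (w : List ℕ) : Prop :=
  ∃ bs : List (List ℕ), (∀ b ∈ bs, b ∈ [[4,1],[4,3],[2,3],[2,5]]) ∧ w = bs.flatten

/-- `n`-fold repetition of a word. -/
def wpow (w : List ℕ) (n : ℕ) : List ℕ := (List.replicate n w).flatten

/-! ### Auxiliary machinery -/

/-- The full alphabet. -/
def L5 : List ℕ := [1,2,3,4,5]

/-- Letters at odd positions of the path (the possible first letters of blocks). -/
def O5 : List ℕ := [2,4]

/-- Adjacency in the path graph 1—4—3—2—5, as a Bool. -/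
def r5 (a b : ℕ) : Bool :=
  ((a,b) = (1,4)) || ((a,b) = (4,1)) || ((a,b) = (4,3)) || ((a,b) = (3,4)) ||
  ((a,b) = (3,2)) || ((a,b) = (2,3)) || ((a,b) = (2,5)) || ((a,b) = (5,2))

/-- Adjacency in the path graph, as a Prop. -/
def R5 (a b : ℕ) : Prop := r5 a b = true

instance : DecidableRel R5 := fun _ _ => inferInstanceAs (Decidable (_ = true))

/-- Boolean chain predicate for `R5`. -/
def chainB : List ℕ → Bool
  | [] => true
  | [_] => true
  | a :: b :: l => r5 a b && chainB (b :: l)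

theorem chainB_iff : ∀ l : List ℕ, chainB l = true ↔ List.Chain' R5 l
  | [] => by simp [chainB, List.Chain']
  | [a] => by simp [chainB, List.Chain']
  | a :: b :: l => by
      rw [show List.Chain' R5 (a :: b :: l) ↔ R5 a b ∧ List.Chain' R5 (b :: l) from List.isChain_cons_cons, ← chainB_iff (b :: l)]
      simp [chainB, R5]

theorem step5 : ∀ x ∈ L5, ∀ y ∈ L5, x ≠ y →
    List.Chain' R5 ((x :: ins5 x y) ++ [y]) := by
  have h : ∀ x ∈ L5, ∀ y ∈ L5, x ≠ y → chainB ((x :: ins5 x y) ++ [y]) = true := by decide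
  exact fun x hx y hy hxy => (chainB_iff _).mp (h x hx y hy hxy)

theorem R5_cases {a b : ℕ} (h : R5 a b) :
    (a = 1 ∧ b = 4) ∨ (a = 4 ∧ b = 1) ∨ (a = 4 ∧ b = 3) ∨ (a = 3 ∧ b = 4) ∨
    (a = 3 ∧ b = 2) ∨ (a = 2 ∧ b = 3) ∨ (a = 2 ∧ b = 5) ∨ (a = 5 ∧ b = 2) := by
  have h' := h
  simp only [R5, r5, Prod.ext_iff, decide_eq_true_eq, Bool.or_eq_true] at h'
  tauto

theorem R5_odd_iff {a b : ℕ} (h : R5 a b) : a ∈ O5 ↔ b ∉ O5 := by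
  rcases R5_cases h with ⟨rfl,rfl⟩|⟨rfl,rfl⟩|⟨rfl,rfl⟩|⟨rfl,rfl⟩|⟨rfl,rfl⟩|⟨rfl,rfl⟩|⟨rfl,rfl⟩|⟨rfl,rfl⟩ <;> decide

theorem R5_irrefl {a : ℕ} (h : R5 a a) : False := by
  have := R5_odd_iff h; tauto

theorem R5_block {a b : ℕ} (h : R5 a b) (ha : a ∈ O5) :
    [a,b] ∈ ([[4,1],[4,3],[2,3],[2,5]] : List (List ℕ)) ∧ b ∉ O5 := by
  rcases R5_cases h with ⟨rfl,rfl⟩|⟨rfl,rfl⟩|⟨rfl,rfl⟩|⟨rfl,rfl⟩|⟨rfl,rfl⟩|⟨rfl,rfl⟩|⟨rfl,rfl⟩|⟨rfl,rfl⟩ <;>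
    first | (exact absurd ha (by decide)) | (exact ⟨by decide, by decide⟩)

/-- Alternation relation for pair-words. -/
def D5 (a b : ℕ) : Prop := a ∈ L5 ∧ b ∈ L5 ∧ (a ∈ O5 ↔ b ∉ O5)

theorem D5_ne {a b : ℕ} (h : D5 a b) : a ≠ b := by
  rintro rfl; rcases h with ⟨-, -, h⟩; tauto

/-- Mapped linear transformation: `Tlin` on an already-shifted word. -/
def Gfun : List ℕ → List ℕ
  | [] => []
  | [x] => [x]
  | x :: y :: rest => (x :: ins5 x y) ++ Gfun (y :: rest)

theorem Tlin_eq_G (j : ℕ) : ∀ w, Tlin j w = Gfun (w.map (sigma5 j))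
  | [] => rfl
  | [x] => rfl
  | x :: y :: rest => by
      simp only [Tlin, List.map_cons, Gfun]
      rw [Tlin_eq_G j (y :: rest)]
      simp [List.map_cons]

theorem sig_mem : ∀ j ∈ ([1,2,3,4] : List ℕ), ∀ x ∈ L5, sigma5 j x ∈ L5 := by decide

theorem sig_ne : ∀ j ∈ ([1,2,3,4] : List ℕ), ∀ x ∈ L5, ∀ y ∈ L5, x ≠ y →
    sigma5 j x ≠ sigma5 j y := by decide

theorem G_chain (j : ℕ) (hj : j ∈ ([1,2,3,4] : List ℕ)) :
    ∀ (t : List ℕ) (x : ℕ), List.Chain' D5 (x :: t) → x ∈ L5 →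
      List.Chain' R5 (Gfun ((x :: t).map (sigma5 j))) ∧
      (Gfun ((x :: t).map (sigma5 j))).head? = some (sigma5 j x) ∧
      (Gfun ((x :: t).map (sigma5 j))).getLast? = some (sigma5 j ((x :: t).getLastD 0))
  | [], x, _, _ => by simp [Gfun, List.Chain']
  | y :: t, x, hc, hx => by
      have hD : D5 x y := (List.isChain_cons_cons.mp hc).1
      have hc' : List.Chain' D5 (y :: t) := (List.isChain_cons_cons.mp hc).2
      have hy : y ∈ L5 := hD.2.1
      have hxy : x ≠ y := D5_ne hD
      obtain ⟨ih1, ih2, ih3⟩ := G_chain j hj t y hc' hy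
      have hne : sigma5 j x ≠ sigma5 j y := sig_ne j hj x hx y hy hxy
      have hstep : List.Chain' R5 ((sigma5 j x :: ins5 (sigma5 j x) (sigma5 j y)) ++ [sigma5 j y]) :=
        step5 _ (sig_mem j hj x hx) _ (sig_mem j hj y hy) hne
      obtain ⟨hs1, -, hs2⟩ := List.isChain_append.mp hstep
      have hGne : Gfun ((y :: t).map (sigma5 j)) ≠ [] := by
        intro h; rw [h] at ih2; exact (Option.some_ne_none _ ih2.symm).elim
      simp only [List.map_cons, Gfun] at *
      refine ⟨?_, ?_, ?_⟩
      · rw [List.Chain', List.isChain_append]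
        refine ⟨hs1, ih1, ?_⟩
        intro a ha b hb
        rw [ih2] at hb
        cases hb
        exact hs2 a ha _ rfl
      · simp
      · rw [List.getLast?_append, ih3]
        have : (x :: y :: t).getLastD 0 = (y :: t).getLastD 0 := by
          simp [List.getLastD]
        rw [← this]
        rcases h : (sigma5 j ((x :: y :: t).getLastD 0)) with _
        simp [Option.or]

theorem pw_even {p : List ℕ} (h : IsPairWord p) : Even p.length := by
  obtain ⟨bs, hbs, rfl⟩ := h
  induction bs with
  | nil => simp
  | cons b bs ih =>
      have hb := hbs b (by simp)
      have h2 : b.length = 2 := by fin_cases hb <;> rfl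
      have := ih (fun b hb => hbs b (by simp [hb]))
      simpa [List.flatten, h2, Nat.even_add] using this

theorem chain_pw : ∀ l : List ℕ, List.Chain' R5 l →
    (∀ x ∈ l.head?, x ∈ O5) → (∀ x ∈ l.getLast?, x ∉ O5) → IsPairWord l
  | [] => fun _ _ _ => ⟨[], by simp, rfl⟩
  | [a] => fun _ h1 h2 => absurd (h1 a rfl) (h2 a rfl)
  | a :: b :: t => fun hc h1 h2 => by
      have hab : R5 a b := (List.isChain_cons_cons.mp hc).1
      have ha : a ∈ O5 := h1 a rfl
      obtain ⟨hblk, hb⟩ := R5_block hab ha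
      cases t with
      | nil => exact ⟨[[a,b]], by simpa using hblk, by simp⟩
      | cons c t' =>
          have hc2 : List.Chain' R5 (b :: c :: t') := (List.isChain_cons_cons.mp hc).2
          have hbc : R5 b c := (List.isChain_cons_cons.mp hc2).1
          have hc3 : List.Chain' R5 (c :: t') := (List.isChain_cons_cons.mp hc2).2
          have hcO : c ∈ O5 := by
            by_contra hcn
            exact hb ((R5_odd_iff hbc).mpr hcn)
          have hlast : ∀ x ∈ (c :: t').getLast?, x ∉ O5 := by
            intro x hx
            exact h2 x (by simpa using hx)
          obtain ⟨bs, hbs, hfl⟩ := chain_pw (c :: t') hc3 (fun x hx => by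
            simp only [List.head?_cons, Option.mem_def, Option.some.injEq] at hx
            exact hx ▸ hcO) hlast
          exact ⟨[a,b] :: bs, by
            intro q hq
            rcases List.mem_cons.mp hq with rfl | hq
            · exact hblk
            · exact hbs q hq, by simp [List.flatten, ← hfl]⟩

theorem cyc_pw (l : List ℕ) (a : ℕ) (ha : l.head? = some a)
    (hc : List.Chain' R5 (l ++ [a])) :
    ∃ p, IsPairWord p ∧ l ~r p := by
  obtain ⟨t, rfl⟩ : ∃ t, l = a :: t := by
    cases l with
    | nil => simp at ha
    | cons x t =>
        simp only [List.head?_cons, Option.some.injEq] at ha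
        exact ⟨t, by rw [ha]⟩
  obtain ⟨hchain, -, hcross⟩ := List.isChain_append.mp hc
  have hlne : (a :: t) ≠ [] := by simp
  set z := (a :: t).getLast hlne with hzdef
  have hz : (a :: t).getLast? = some z := List.getLast?_eq_getLast_of_ne_nil hlne
  have hza : R5 z a := hcross z hz a rfl
  by_cases haO : a ∈ O5
  · have hlastO : ∀ x ∈ (a :: t).getLast?, x ∉ O5 := by
      intro x hx hxO
      rw [hz] at hx; cases hx
      exact (R5_odd_iff hza).mp hxO haO
    exact ⟨a :: t, chain_pw _ hchain (fun x hx => by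
      simp only [List.head?_cons, Option.mem_def, Option.some.injEq] at hx
      exact hx ▸ haO) hlastO, List.IsRotated.refl _⟩
  · cases t with
    | nil =>
        exfalso
        have : z = a := by simp [hzdef]
        exact R5_irrefl (this ▸ hza)
    | cons c t' =>
        have hac : R5 a c := (List.isChain_cons_cons.mp hchain).1
        have hc3 : List.Chain' R5 (c :: t') := (List.isChain_cons_cons.mp hchain).2
        have hcO : c ∈ O5 := by
          by_contra hcn
          exact haO ((R5_odd_iff hac).mpr hcn)
        have hz' : (c :: t').getLast? = some z := by
          rw [← hz]; simp
        have hchain' : List.Chain' R5 ((c :: t') ++ [a]) := by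
          rw [List.Chain', List.isChain_append]
          refine ⟨hc3, List.isChain_singleton a, ?_⟩
          intro x hx y hy
          rw [hz'] at hx; cases hx
          cases hy
          exact hza
        have hpw : IsPairWord ((c :: t') ++ [a]) := by
          apply chain_pw _ hchain'
          · intro x hx
            simp only [List.cons_append, List.head?_cons, Option.mem_def,
              Option.some.injEq] at hx
            exact hx ▸ hcO
          · intro x hx
            rw [List.getLast?_concat] at hx; cases hx
            exact haO
        refine ⟨(c :: t') ++ [a], hpw, ⟨1, ?_⟩⟩
        rw [List.rotate_cons_succ, List.rotate_zero]

theorem pw_facts : ∀ bs : List (List ℕ),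
    (∀ b ∈ bs, b ∈ ([[4,1],[4,3],[2,3],[2,5]] : List (List ℕ))) →
    List.Chain' D5 bs.flatten ∧ (∀ x ∈ bs.flatten.head?, x ∈ O5) ∧
      (∀ x ∈ bs.flatten.getLast?, x ∉ O5 ∧ x ∈ L5)
  | [] => fun _ => by simp [List.Chain']
  | b :: bs => fun hbs => by
      obtain ⟨o, e, rfl, hoO, heO, heL, hDoe⟩ :
          ∃ o e, b = [o, e] ∧ o ∈ O5 ∧ e ∉ O5 ∧ e ∈ L5 ∧ D5 o e := by
        have hb := hbs b (by simp)
        fin_cases hb <;> exact ⟨_, _, rfl, by decide, by decide, by decide,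
          by refine ⟨by decide, by decide, by decide⟩⟩
      obtain ⟨ih1, ih2, ih3⟩ := pw_facts bs (fun q hq => hbs q (by simp [hq]))
      have hflat : ([o, e] :: bs).flatten = [o, e] ++ bs.flatten := rfl
      rw [hflat]
      refine ⟨?_, ?_, ?_⟩
      · rw [List.Chain', List.isChain_append]
        refine ⟨by simpa using hDoe, ih1, ?_⟩
        intro x hx y hy
        simp only [List.getLast?_cons_cons, List.getLast?_singleton, Option.mem_def,
          Option.some.injEq] at hx
        subst hx
        have hyO : y ∈ O5 := ih2 y hy
        have hyL : y ∈ L5 := by fin_cases hyO <;> decide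
        exact ⟨heL, hyL, by constructor <;> intro h <;> [exact absurd h heO; exact absurd hyO h]⟩
      · intro x hx
        simp only [List.cons_append, List.head?_cons, Option.mem_def, Option.some.injEq] at hx
        exact hx ▸ hoO
      · intro x hx
        rw [List.getLast?_append] at hx
        cases hflb : bs.flatten.getLast? with
        | none =>
            rw [hflb] at hx
            simp only [Option.or, List.getLast?_cons_cons, List.getLast?_singleton,
              Option.mem_def, Option.some.injEq] at hx
            exact hx ▸ ⟨heO, heL⟩
        | some v =>
            rw [hflb] at hx
            simp only [Option.or, Option.mem_def, Option.some.injEq] at hx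
            exact hx ▸ ih3 v (by rw [hflb]; rfl)

theorem stmt9 (w : List ℕ) (hw : IsPairWord w) (hne : w ≠ []) (j : ℕ)
    (hj : j ∈ Finset.Icc 1 4) :
    (∃ p : List ℕ, IsPairWord p ∧ Tcyc j w ~r p) ∧ Even (Tcyc j w).length := by
  have hjL : j ∈ ([1,2,3,4] : List ℕ) := by
    obtain ⟨h1, h2⟩ := Finset.mem_Icc.mp hj
    interval_cases j <;> decide
  obtain ⟨bs, hbs, rfl⟩ := hw
  obtain ⟨hchain, hhead, hlast⟩ := pw_facts bs hbs
  obtain ⟨x, t, hxt⟩ := List.exists_cons_of_ne_nil hne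
  rw [hxt] at hchain hhead hlast ⊢
  -- head and last letters
  have hxO : x ∈ O5 := hhead x rfl
  have hxL : x ∈ L5 := by fin_cases hxO <;> decide
  set z := (x :: t).getLastD 0 with hzdef
  have hzl : (x :: t).getLast? = some z := by
    rw [hzdef, List.getLastD_eq_getLast?]
    cases h : (x :: t).getLast? with
    | none => simp at h
    | some v => rfl
  have hzO : z ∉ O5 := (hlast z hzl).1
  have hzL : z ∈ L5 := (hlast z hzl).2
  have hzx : z ≠ x := fun h => hzO (h ▸ hxO)
  -- the Gfun part
  obtain ⟨hG1, hG2, hG3⟩ := G_chain j hjL t x hchain hxL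
  -- the wrap-around step
  have hnez : sigma5 j z ≠ sigma5 j x := sig_ne j hjL z hzL x hxL hzx
  have hstep : List.Chain' R5 ((sigma5 j z :: ins5 (sigma5 j z) (sigma5 j x)) ++ [sigma5 j x]) :=
    step5 _ (sig_mem j hjL z hzL) _ (sig_mem j hjL x hxL) hnez
  have hstep' : List.Chain' R5 (sigma5 j z :: (ins5 (sigma5 j z) (sigma5 j x) ++ [sigma5 j x])) := by
    simpa using hstep
  obtain ⟨hs1, hs2⟩ := List.isChain_cons.mp hstep'
  -- Tcyc description
  have hT : Tcyc j (x :: t) =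
      Gfun ((x :: t).map (sigma5 j)) ++ ins5 (sigma5 j z) (sigma5 j x) := by
    rw [Tcyc, Tlin_eq_G]
    rfl
  -- head of Tcyc
  have hGne : Gfun ((x :: t).map (sigma5 j)) ≠ [] := by
    intro h; rw [h] at hG2; exact (Option.some_ne_none _ hG2.symm).elim
  have hTh : (Tcyc j (x :: t)).head? = some (sigma5 j x) := by
    rw [hT, List.head?_append, hG2]; rfl
  -- cyclic chain
  have hTc : List.Chain' R5 (Tcyc j (x :: t) ++ [sigma5 j x]) := by
    rw [hT, List.append_assoc, List.Chain', List.isChain_append]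
    refine ⟨hG1, hstep'.tail, ?_⟩
    intro p hp q hq
    rw [hG3, ← hzdef] at hp
    cases hp
    exact hs1 q hq
  obtain ⟨p, hp1, hp2⟩ := cyc_pw _ _ hTh hTc
  refine ⟨⟨p, hp1, hp2⟩, ?_⟩
  obtain ⟨n, hn⟩ := hp2
  have hlen : (Tcyc j (x :: t)).length = p.length := by rw [← hn]; simp
  rw [hlen]
  exact pw_even hp1
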